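/- For q ∈ (G, 2), where G = (1+√5)/2: q belongs to B_2 (i.e., there exists x ∈ [0,1/(q-1)] having exactly two expansions in base q) if and only if 1 ∈ U_q − U_q, i.e., there exist y, z ∈ U_q with z − y = 1. -/

import Mathlib

noncomputable section

/-- `a` is an expansion of `x` in base `q`: all digits `a n` lie in `{0,1}` and
`x = Σ_{n≥1} a_n q^{-n}` (here `a n` is the `(n+1)`-st digit, i.e. indexing is 0-based). -/
def IsExpansion (q x : ℝ) (a : ℕ → ℕ) : Prop :=
  (∀ n, a n ≤ 1) ∧ x = ∑' n : ℕ, (a n : ℝ) / q ^ (n + 1)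

/-- The set of expansions of `x` in base `q`. -/
def expansionsOf (q x : ℝ) : Set (ℕ → ℕ) := {a | IsExpansion q x a}

/-- `U_q`: the set of `x ∈ [0, 1/(q-1)]` having a unique expansion in base `q`. -/
def uniqueExpansionSet (q : ℝ) : Set ℝ :=
  {x | x ∈ Set.Icc 0 (1 / (q - 1)) ∧ ∃! a, IsExpansion q x a}

/-- `B_m` (for finite `m`): bases `q ∈ (G, 2)` for which some `x ∈ I_q` has exactly `m`
expansions in base `q`. -/
def B (m : ℕ) : Set ℝ :=
  {q | q ∈ Set.Ioo ((1 + Real.sqrt 5) / 2) 2 ∧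
    ∃ x ∈ Set.Icc (0:ℝ) (1 / (q - 1)), Cardinal.mk (expansionsOf q x) = m}

/-- `B_{ℵ₀}`: bases `q ∈ (G, 2)` for which some `x ∈ I_q` has exactly countably infinitely
many expansions in base `q`. -/
def Baleph0 : Set ℝ :=
  {q | q ∈ Set.Ioo ((1 + Real.sqrt 5) / 2) 2 ∧
    ∃ x ∈ Set.Icc (0:ℝ) (1 / (q - 1)), Cardinal.mk (expansionsOf q x) = Cardinal.aleph0}

/-- The Thue–Morse sequence: `thueMorse n` is the parity of the number of 1s in the
binary expansion of `n`. -/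
def thueMorse (n : ℕ) : ℕ := ((Nat.digits 2 n).count 1) % 2

/-- A digit `a m` of an expansion of `x` in base `q` is forced if every expansion of `x`
agreeing with `a` before position `m` also agrees at position `m`. -/
def Forced (q x : ℝ) (a : ℕ → ℕ) (m : ℕ) : Prop :=
  ∀ c : ℕ → ℕ, IsExpansion q x c → (∀ i < m, c i = a i) → c m = a m

lemma exp_summable {q : ℝ} (hq : 1 < q) {a : ℕ → ℕ} (ha : ∀ n, a n ≤ 1) :
    Summable (fun n => (a n : ℝ) / q ^ (n + 1)) := by
  have hq0 : 0 < q := lt_trans one_pos hq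
  have hr : (0:ℝ) ≤ 1/q := by positivity
  have hr1 : 1/q < 1 := by rw [div_lt_one hq0]; exact hq
  have hs : Summable (fun n : ℕ => ((1:ℝ)/q)^(n+1)) := by
    simpa [pow_succ] using (summable_geometric_of_lt_one hr hr1).mul_right (1/q)
  refine Summable.of_nonneg_of_le (fun n => by positivity) (fun n => ?_) hs
  rw [div_pow, one_pow]
  gcongr
  exact_mod_cast ha n

lemma geom_tsum {q : ℝ} (hq : 1 < q) : ∑' n : ℕ, ((1:ℝ)/q)^(n+1) = 1/(q-1) := by
  have hq0 : 0 < q := lt_trans one_pos hq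
  have hr : (0:ℝ) ≤ 1/q := by positivity
  have hr1 : 1/q < 1 := by rw [div_lt_one hq0]; exact hq
  have h1 : q - 1 ≠ 0 := by linarith
  have := tsum_geometric_of_lt_one hr hr1
  calc ∑' n : ℕ, ((1:ℝ)/q)^(n+1) = (∑' n : ℕ, ((1:ℝ)/q)^n) * (1/q) := by
        rw [← tsum_mul_right]; simp [pow_succ]
    _ = 1/(q-1) := by
        rw [this]; rw [eq_div_iff h1]; field_simp

lemma exp_mem_Icc {q : ℝ} (hq : 1 < q) {a : ℕ → ℕ} (ha : ∀ n, a n ≤ 1) :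
    (∑' n : ℕ, (a n : ℝ) / q ^ (n + 1)) ∈ Set.Icc 0 (1/(q-1)) := by
  have hq0 : 0 < q := lt_trans one_pos hq
  constructor
  · exact tsum_nonneg (fun n => by positivity)
  · rw [← geom_tsum hq]
    refine Summable.tsum_le_tsum (fun n => ?_) (exp_summable hq ha) ?_
    · rw [div_pow, one_pow]
      gcongr
      exact_mod_cast ha n
    · have hr : (0:ℝ) ≤ 1/q := by positivity
      have hr1 : 1/q < 1 := by rw [div_lt_one hq0]; exact hq
      simpa [pow_succ] using (summable_geometric_of_lt_one hr hr1).mul_right (1/q)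

lemma tsum_split {q : ℝ} (hq : 1 < q) {a : ℕ → ℕ} (ha : ∀ n, a n ≤ 1) (k : ℕ) :
    (∑' n : ℕ, (a n : ℝ) / q ^ (n + 1)) =
      (∑ i ∈ Finset.range k, (a i : ℝ) / q ^ (i + 1)) +
        (1/q^k) * ∑' n : ℕ, (a (n + k) : ℝ) / q ^ (n + 1) := by
  have hq0 : 0 < q := lt_trans one_pos hq
  rw [← Summable.sum_add_tsum_nat_add k (exp_summable hq ha)]
  congr 1
  rw [← tsum_mul_left]
  refine tsum_congr (fun n => ?_)
  rw [show n + k + 1 = (n+1) + k by ring, pow_add, one_div_mul_eq_div, div_div]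

lemma cons_expansion {q y : ℝ} (hq : 1 < q) (d : ℕ) (hd : d ≤ 1) {α : ℕ → ℕ}
    (hα : IsExpansion q y α) :
    IsExpansion q ((y + d)/q) (fun n => if n = 0 then d else α (n-1)) := by
  have hq0 : 0 < q := lt_trans one_pos hq
  have hdig : ∀ n, (if n = 0 then d else α (n-1)) ≤ 1 := by
    intro n; rcases n with _ | n <;> simp [hd, hα.1]
  refine ⟨hdig, ?_⟩
  rw [Summable.tsum_eq_zero_add (exp_summable hq hdig)]
  have h2 : ∀ n : ℕ, ((if n + 1 = 0 then d else α (n+1-1) : ℕ) : ℝ) / q ^ (n+1+1)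
      = ((α n : ℝ) / q ^ (n+1)) * (1/q) := by
    intro n
    rw [if_neg (Nat.succ_ne_zero n)]
    simp only [Nat.add_sub_cancel]
    rw [pow_succ]
    field_simp
  rw [tsum_congr h2, tsum_mul_right, ← hα.2, if_pos rfl]
  rw [pow_one]
  field_simp
  ring

lemma tail_expansion {q x : ℝ} (hq : 1 < q) {c : ℕ → ℕ} (hc : IsExpansion q x c) :
    IsExpansion q (q * x - c 0) (fun n => c (n+1)) := by
  have hq0 : 0 < q := lt_trans one_pos hq
  refine ⟨fun n => hc.1 _, ?_⟩
  have h := hc.2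
  rw [Summable.tsum_eq_zero_add (exp_summable hq hc.1)] at h
  have h2 : ∀ n : ℕ, (c (n+1) : ℝ) / q ^ (n+1+1) = ((c (n+1) : ℝ) / q ^ (n+1)) * (1/q) := by
    intro n; rw [pow_succ]; field_simp
  rw [tsum_congr h2, tsum_mul_right] at h
  rw [h]
  field_simp
  ring


lemma key_lemma {q x : ℝ} (hq1 : 1 < q) {a b : ℕ → ℕ}
    (haE : IsExpansion q x a) (hbE : IsExpansion q x b)
    (hmem : ∀ c, IsExpansion q x c → c = a ∨ c = b)
    (m : ℕ) (hagree : ∀ i < m, a i = b i) (ham : a m = 1) (hbm : b m = 0) :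
    ∃ y ∈ uniqueExpansionSet q, ∃ z ∈ uniqueExpansionSet q, z - y = 1 := by
  have hqk : (0:ℝ) < q^(m+1) := by positivity
  set y := ∑' n : ℕ, (a (n + (m+1)) : ℝ)/q^(n+1) with hy
  set z := ∑' n : ℕ, (b (n + (m+1)) : ℝ)/q^(n+1) with hz
  have hyE : IsExpansion q y (fun n => a (n+(m+1))) := ⟨fun n => haE.1 _, rfl⟩
  have hzE : IsExpansion q z (fun n => b (n+(m+1))) := ⟨fun n => hbE.1 _, rfl⟩
  have hsa : x = (∑ i ∈ Finset.range (m+1), (a i : ℝ)/q^(i+1)) + (1/q^(m+1)) * y := by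
    rw [haE.2]; exact tsum_split hq1 haE.1 (m+1)
  have hsb : x = (∑ i ∈ Finset.range (m+1), (b i : ℝ)/q^(i+1)) + (1/q^(m+1)) * z := by
    rw [hbE.2]; exact tsum_split hq1 hbE.1 (m+1)
  have hP : (∑ i ∈ Finset.range (m+1), (a i : ℝ)/q^(i+1))
      = (∑ i ∈ Finset.range (m+1), (b i : ℝ)/q^(i+1)) + 1/q^(m+1) := by
    rw [Finset.sum_range_succ, Finset.sum_range_succ, ham, hbm]
    have heq : ∑ i ∈ Finset.range m, (a i : ℝ)/q^(i+1)
        = ∑ i ∈ Finset.range m, (b i : ℝ)/q^(i+1) :=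
      Finset.sum_congr rfl (fun i hi => by rw [hagree i (Finset.mem_range.mp hi)])
    rw [heq]
    push_cast
    ring
  have hzy : z - y = 1 := by
    have h1 : (1/q^(m+1)) * z = (1/q^(m+1)) * y + 1/q^(m+1) := by linarith
    have h2 : (1/q^(m+1)) * (z - y) = (1/q^(m+1)) * 1 := by ring_nf; ring_nf at h1; linarith
    have := mul_left_cancel₀ (show (1/q^(m+1)) ≠ 0 by positivity) h2
    linarith
  -- uniqueness of expansion of y
  have hyU : ∃! c, IsExpansion q y c := by
    refine ⟨fun n => a (n+(m+1)), hyE, ?_⟩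
    intro c hc
    set c' := fun n => if n < m+1 then a n else c (n - (m+1)) with hc'
    have hc'dig : ∀ n, c' n ≤ 1 := by
      intro n; simp only [hc']; split_ifs <;> simp [haE.1, hc.1]
    have hc'tail : ∀ n, c' (n + (m+1)) = c n := by
      intro n
      have h : ¬ (n + (m+1) < m+1) := by omega
      simp [hc', h]; intro h'; omega
    have hc'E : IsExpansion q x c' := by
      refine ⟨hc'dig, ?_⟩
      rw [tsum_split hq1 hc'dig (m+1)]
      have heq1 : ∑ i ∈ Finset.range (m+1), (c' i : ℝ)/q^(i+1)
          = ∑ i ∈ Finset.range (m+1), (a i : ℝ)/q^(i+1) :=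
        Finset.sum_congr rfl (fun i hi => by
          rw [show c' i = a i by simp [hc', Finset.mem_range.mp hi]; intro h'; have := Finset.mem_range.mp hi; omega])
      have heq2 : ∑' n : ℕ, (c' (n + (m+1)) : ℝ)/q^(n+1) = ∑' n : ℕ, (c n : ℝ)/q^(n+1) :=
        tsum_congr (fun n => by rw [hc'tail n])
      rw [heq1, heq2, ← hc.2]
      exact hsa
    rcases hmem c' hc'E with h | h
    · funext n
      have := congrFun h (n + (m+1))
      rw [hc'tail] at this
      exact this
    · exfalso
      have := congrFun h m
      have hm' : c' m = a m := by simp [hc', Nat.lt_succ_self]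
      rw [hm', ham, hbm] at this
      exact one_ne_zero this
  have hzU : ∃! c, IsExpansion q z c := by
    refine ⟨fun n => b (n+(m+1)), hzE, ?_⟩
    intro c hc
    set c' := fun n => if n < m+1 then b n else c (n - (m+1)) with hc'
    have hc'dig : ∀ n, c' n ≤ 1 := by
      intro n; simp only [hc']; split_ifs <;> simp [hbE.1, hc.1]
    have hc'tail : ∀ n, c' (n + (m+1)) = c n := by
      intro n
      have h : ¬ (n + (m+1) < m+1) := by omega
      simp [hc', h]; intro h'; omega
    have hc'E : IsExpansion q x c' := by
      refine ⟨hc'dig, ?_⟩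
      rw [tsum_split hq1 hc'dig (m+1)]
      have heq1 : ∑ i ∈ Finset.range (m+1), (c' i : ℝ)/q^(i+1)
          = ∑ i ∈ Finset.range (m+1), (b i : ℝ)/q^(i+1) :=
        Finset.sum_congr rfl (fun i hi => by
          rw [show c' i = b i by simp [hc', Finset.mem_range.mp hi]; intro h'; have := Finset.mem_range.mp hi; omega])
      have heq2 : ∑' n : ℕ, (c' (n + (m+1)) : ℝ)/q^(n+1) = ∑' n : ℕ, (c n : ℝ)/q^(n+1) :=
        tsum_congr (fun n => by rw [hc'tail n])
      rw [heq1, heq2, ← hc.2]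
      exact hsb
    rcases hmem c' hc'E with h | h
    · exfalso
      have := congrFun h m
      have hm' : c' m = b m := by simp [hc', Nat.lt_succ_self]
      rw [hm', ham, hbm] at this
      exact one_ne_zero this.symm
    · funext n
      have := congrFun h (n + (m+1))
      rw [hc'tail] at this
      exact this
  exact ⟨y, ⟨exp_mem_Icc hq1 (fun n => haE.1 _), hyU⟩,
    z, ⟨exp_mem_Icc hq1 (fun n => hbE.1 _), hzU⟩, hzy⟩

theorem stmt1 (q : ℝ) (hq : q ∈ Set.Ioo ((1 + Real.sqrt 5) / 2) 2) :
    q ∈ B 2 ↔ ∃ y ∈ uniqueExpansionSet q, ∃ z ∈ uniqueExpansionSet q, z - y = 1 := by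
  have hs5 : (2:ℝ) < Real.sqrt 5 := by
    nlinarith [Real.sq_sqrt (show (0:ℝ) ≤ 5 by norm_num), Real.sqrt_nonneg 5]
  have hq1 : 1 < q := by
    have := hq.1
    nlinarith
  have hq0 : 0 < q := lt_trans one_pos hq1
  constructor
  · rintro ⟨-, x, hxI, hcard⟩
    have hcard2 : Cardinal.mk (expansionsOf q x) = 2 := by
      rw [hcard]; norm_num
    rw [Cardinal.mk_eq_two_iff] at hcard2
    obtain ⟨u, v, hne, huniv⟩ := hcard2
    set a := u.1 with ha
    set b := v.1 with hb
    have haE : IsExpansion q x a := u.2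
    have hbE : IsExpansion q x b := v.2
    have hab : a ≠ b := fun h => hne (Subtype.ext h)
    have hmem : ∀ c, IsExpansion q x c → c = a ∨ c = b := by
      intro c hc
      have h := Set.eq_univ_iff_forall.mp huniv ⟨c, hc⟩
      rcases h with h | h
      · left; exact congrArg Subtype.val h
      · right; exact congrArg Subtype.val h
    have hex : ∃ m, a m ≠ b m := Function.ne_iff.mp hab
    have hdiff : a (Nat.find hex) ≠ b (Nat.find hex) := Nat.find_spec hex
    have hagree : ∀ i < Nat.find hex, a i = b i :=
      fun i hi => not_not.mp (Nat.find_min hex hi)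
    have h01a := Nat.le_one_iff_eq_zero_or_eq_one.mp (haE.1 (Nat.find hex))
    have h01b := Nat.le_one_iff_eq_zero_or_eq_one.mp (hbE.1 (Nat.find hex))
    rcases h01a with h1 | h1 <;> rcases h01b with h2 | h2
    · exact absurd (h1.trans h2.symm) hdiff
    · exact key_lemma hq1 hbE haE (fun c hc => (hmem c hc).symm) (Nat.find hex)
        (fun i hi => (hagree i hi).symm) h2 h1
    · exact key_lemma hq1 haE hbE hmem (Nat.find hex) hagree h1 h2
    · exact absurd (h1.trans h2.symm) hdiff
  · rintro ⟨y, ⟨hyI, α, hαE, hαu⟩, z, ⟨hzI, β, hβE, hβu⟩, hzy⟩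
    have hy1 : z = y + 1 := by linarith
    set a : ℕ → ℕ := fun n => if n = 0 then 1 else α (n-1) with hadef
    set b : ℕ → ℕ := fun n => if n = 0 then 0 else β (n-1) with hbdef
    set x := (y + 1)/q with hxdef
    have haE : IsExpansion q x a := by
      have := cons_expansion hq1 1 le_rfl hαE
      simpa using this
    have hbE : IsExpansion q x b := by
      have := cons_expansion hq1 0 (by norm_num) hβE
      have hx : (z + (0:ℕ))/q = x := by rw [hxdef, hy1]; norm_num
      rwa [hx] at this
    have hqx : q * x = z := by rw [hxdef, hy1]; field_simp
    have hset : expansionsOf q x = {a, b} := by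
      ext c
      simp only [expansionsOf, Set.mem_setOf_eq, Set.mem_insert_iff, Set.mem_singleton_iff]
      constructor
      · intro hc
        have htail := tail_expansion hq1 hc
        rcases Nat.le_one_iff_eq_zero_or_eq_one.mp (hc.1 0) with h0 | h0
        · right
          rw [h0] at htail
          have hexp : IsExpansion q z (fun n => c (n+1)) := by
            rw [← hqx]; simpa using htail
          have hcb := hβu _ hexp
          funext n
          rcases n with _ | n
          · simp [hbdef, h0]
          · have := congrFun hcb n
            simp [hbdef, this]
        · left
          rw [h0] at htail
          have hexp : IsExpansion q y (fun n => c (n+1)) := by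
            have : q * x - (1:ℕ) = y := by rw [hqx, hy1]; push_cast; ring
            rwa [this] at htail
          have hca := hαu _ hexp
          funext n
          rcases n with _ | n
          · simp [hadef, h0]
          · have := congrFun hca n
            simp [hadef, this]
      · rintro (rfl | rfl)
        · exact haE
        · exact hbE
    have hxI : x ∈ Set.Icc (0:ℝ) (1/(q-1)) := by
      constructor
      · rw [hxdef]
        have := hyI.1
        positivity
      · rw [hxdef, ← hy1]
        calc z/q ≤ z := div_le_self hzI.1 (le_of_lt hq1)
          _ ≤ 1/(q-1) := hzI.2
    refine ⟨hq, x, hxI, ?_⟩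
    rw [hset]
    have hab : a ≠ b := by
      intro h
      have := congrFun h 0
      simp [hadef, hbdef] at this
    rw [Cardinal.mk_insert (by simpa using hab), Cardinal.mk_singleton]
    norm_num
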